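/- For any natural number n ≥ 1, the sum over σ in S_n of sign(σ)/((fix(σ)+1)(fix(σ)+2)) equals (-1)^(n+1)·(n² + n - 1)/((n+1)(n+2)). -/

import Mathlib

open Polynomial Finset

lemma point_sum (n : ℕ) (hn : 1 ≤ n) (x : ℚ) :
    ∑ σ : Equiv.Perm (Fin n), ((Equiv.Perm.sign σ : ℤ) : ℚ) *
        x ^ (Finset.univ.filter fun i => σ i = i).card
      = (x - 1)^(n-1) * (x + n - 1) := by
  have key : (Matrix.of fun i j : Fin n => if i = j then x else 1).det
      = ∑ σ : Equiv.Perm (Fin n), ((Equiv.Perm.sign σ : ℤ) : ℚ) *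
        x ^ (Finset.univ.filter fun i => σ i = i).card := by
    rw [Matrix.det_apply]
    refine Finset.sum_congr rfl fun σ _ => ?_
    have h1 : ∏ i : Fin n, (Matrix.of fun i j : Fin n => if i = j then x else 1) (σ i) i
        = x ^ (Finset.univ.filter fun i => σ i = i).card := by
      simp only [Matrix.of_apply]
      rw [← Finset.prod_const, Finset.prod_filter]
    rw [h1]
    simp [Units.smul_def, zsmul_eq_mul]
  rw [← key]
  rcases eq_or_ne x 1 with rfl | hx
  · rcases Nat.lt_or_ge n 2 with h2 | h2
    · interval_cases n
      simp [Matrix.det_fin_one]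
    · have hz : (Matrix.of fun i j : Fin n => if i = j then (1:ℚ) else 1).det = 0 := by
        apply Matrix.det_zero_of_row_eq (i := ⟨0, by omega⟩) (j := ⟨1, by omega⟩)
        · simp [Fin.ext_iff]
        · funext j; simp
      rw [hz]
      have h1 : (1:ℚ) - 1 = 0 := by ring
      rw [h1, zero_pow (by omega)]
      ring
  · have hx' : x - 1 ≠ 0 := sub_ne_zero.mpr hx
    have hM : (Matrix.of fun i j : Fin n => if i = j then x else 1)
        = (x - 1) • (1 + Matrix.replicateCol Unit (fun _ : Fin n => (x-1)⁻¹) *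
            Matrix.replicateRow Unit (fun _ : Fin n => (1:ℚ))) := by
      funext i j
      simp only [Matrix.of_apply, Matrix.smul_apply, Matrix.add_apply, Matrix.one_apply,
        Matrix.mul_apply, Matrix.replicateCol_apply, Matrix.replicateRow_apply, Finset.sum_const,
        Finset.card_univ, Fintype.card_unit, one_smul, mul_one, smul_eq_mul]
      rcases eq_or_ne i j with rfl | hij
      · simp; field_simp; ring
      · simp [hij]; field_simp
    rw [hM, Matrix.det_smul, Matrix.det_one_add_replicateCol_mul_replicateRow]
    simp [dotProduct, Finset.card_univ]
    rw [show n = (n-1)+1 by omega, pow_succ]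
    have hncast : ((n:ℚ)) = ((n-1 : ℕ) : ℚ) + 1 := by
      push_cast [Nat.cast_sub hn]; ring
    field_simp
    simp only [Nat.add_sub_cancel, Nat.add_sub_cancel_left]
    ring

lemma poly_sum (n : ℕ) (hn : 1 ≤ n) :
    (∑ σ : Equiv.Perm (Fin n), C ((Equiv.Perm.sign σ : ℤ) : ℚ) *
        X ^ (Finset.univ.filter fun i => σ i = i).card)
      = (X - 1)^(n-1) * (X + C (n:ℚ) - 1) := by
  apply Polynomial.funext
  intro x
  simp only [eval_finset_sum, eval_mul, eval_pow, eval_C, eval_X, eval_sub, eval_add, eval_one]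
  exact point_sum n hn x

lemma term_deriv2 (k : ℕ) :
    derivative (derivative (C (1/(((k:ℚ)+1)*((k:ℚ)+2))) * X^(k+2))) = (X:ℚ[X])^k := by
  have h1 : ((k:ℚ)+1) ≠ 0 := by positivity
  have h2 : ((k:ℚ)+2) ≠ 0 := by positivity
  rw [derivative_C_mul, derivative_X_pow, derivative_C_mul, derivative_C_mul, derivative_X_pow]
  rw [show (k+2-1) = k+1 from rfl, show (k+1-1) = k from rfl]
  rw [← mul_assoc, ← mul_assoc, ← C_mul, ← C_mul]
  have : (1/(((k:ℚ)+1)*((k:ℚ)+2))) * ((k:ℚ)+2) * ((k:ℚ)+1) = 1 := by field_simp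
  push_cast
  rw [this, C_1, one_mul]

theorem sum_k2 (n : ℕ) (hn : 1 ≤ n) :
    (∑ σ : Equiv.Perm (Fin n),
      ((Equiv.Perm.sign σ : ℤ) : ℚ) /
        ((((Finset.univ.filter fun i => σ i = i).card : ℚ) + 1) *
          (((Finset.univ.filter fun i => σ i = i).card : ℚ) + 2)))
      = (-1 : ℚ) ^ (n + 1) * ((n : ℚ)^2 + n - 1) / (((n : ℚ) + 1) * ((n : ℚ) + 2)) := by
  have hn1 : ((n:ℚ)+1) ≠ 0 := by positivity
  have hn2 : ((n:ℚ)+2) ≠ 0 := by positivity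
  set k : Equiv.Perm (Fin n) → ℕ := fun σ => (Finset.univ.filter fun i => σ i = i).card with hk
  set F : ℚ[X] := ∑ σ : Equiv.Perm (Fin n),
      C ((Equiv.Perm.sign σ : ℤ) : ℚ) * (C (1/(((k σ:ℚ)+1)*((k σ:ℚ)+2))) * X^(k σ+2)) with hF
  set G : ℚ[X] := C (1/(((n:ℚ)+1)*((n:ℚ)+2))) * (X-1)^(n+2) + C (1/((n:ℚ)+1)) * (X-1)^(n+1)
    with hG
  -- second derivatives agree
  have hF2 : derivative (derivative F) = (X - 1)^(n-1) * (X + C (n:ℚ) - 1) := by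
    rw [hF, ← poly_sum n hn]
    rw [map_sum, map_sum]
    refine Finset.sum_congr rfl fun σ _ => ?_
    rw [derivative_C_mul, derivative_C_mul, term_deriv2]
  have hG2 : derivative (derivative G) = (X - 1)^(n-1) * (X + C (n:ℚ) - 1) := by
    have hd : derivative ((X:ℚ[X]) - 1) = 1 := by
      rw [derivative_sub, derivative_X, derivative_one, sub_zero]
    rw [hG]
    rw [derivative_add, derivative_C_mul, derivative_C_mul, derivative_pow, derivative_pow, hd]
    rw [derivative_add, derivative_C_mul, derivative_C_mul]
    simp only [mul_one, Nat.add_sub_cancel, derivative_mul, derivative_C, zero_mul, zero_add,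
      derivative_pow, hd, mul_one]
    rw [show n + 2 - 1 - 1 = n by omega]
    push_cast
    simp only [← mul_assoc, ← C_mul]
    rw [show (1/(((n:ℚ)+1)*((n:ℚ)+2))) * ((n:ℚ)+2) * ((n:ℚ)+1) = 1 by field_simp,
      show (1/((n:ℚ)+1))*((n:ℚ)+1)*(n:ℚ) = (n:ℚ) by field_simp, C_1, one_mul]
    rw [show ((X:ℚ[X]) - 1)^n = (X-1)^(n-1) * (X-1) by
      rw [← pow_succ]; congr 1; omega]
    ring
  have hFG : derivative (derivative (F - G)) = 0 := by
    rw [derivative_sub, derivative_sub, hF2, hG2, sub_self]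
  set c : ℚ := (derivative (F - G)).coeff 0 with hc
  have h1 : derivative (F - G) = C c := eq_C_of_derivative_eq_zero hFG
  set a : ℚ := (F - G - C c * X).coeff 0 with ha
  have h2 : F - G - C c * X = C a := by
    apply eq_C_of_derivative_eq_zero
    rw [derivative_sub, h1, derivative_mul, derivative_C, derivative_X, zero_mul, mul_one,
      zero_add, sub_self]
  have hF0 : eval 0 F = 0 := by
    rw [hF, eval_finset_sum]
    simp
  have hF'0 : eval 0 (derivative F) = 0 := by
    rw [hF, map_sum, eval_finset_sum]
    refine Finset.sum_eq_zero fun σ _ => ?_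
    rw [derivative_C_mul, derivative_C_mul, derivative_X_pow]
    simp
  have hG'0 : eval 0 (derivative G) =
      (1/(((n:ℚ)+1)*((n:ℚ)+2))) * (((n:ℚ)+2) * (-1)^(n+1))
        + (1/((n:ℚ)+1)) * (((n:ℚ)+1) * (-1)^n) := by
    rw [hG]
    rw [derivative_add, derivative_C_mul, derivative_C_mul, derivative_pow, derivative_pow]
    simp only [derivative_sub, derivative_X, derivative_one, sub_zero, mul_one,
      Nat.add_sub_cancel]
    push_cast
    simp [zero_sub]
  have hG0 : eval 0 G =
      (1/(((n:ℚ)+1)*((n:ℚ)+2))) * (-1)^(n+2) + (1/((n:ℚ)+1)) * (-1)^(n+1) := by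
    rw [hG]
    simp [zero_sub]
  have hG1 : eval 1 G = 0 := by
    rw [hG]
    simp
  have hcval : c = - eval 0 (derivative G) := by
    have := congrArg (eval 0) h1
    rw [derivative_sub, eval_sub, hF'0, eval_C] at this
    rw [← this]; ring
  have haval : a = - eval 0 G := by
    have := congrArg (eval 0) h2
    rw [eval_sub, eval_sub, eval_mul, eval_C, eval_C, eval_X, hF0] at this
    rw [← this]; ring
  have hFeq : F = G + C c * X + C a := by linear_combination h2
  have hL : (∑ σ : Equiv.Perm (Fin n),
      ((Equiv.Perm.sign σ : ℤ) : ℚ) /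
        ((((Finset.univ.filter fun i => σ i = i).card : ℚ) + 1) *
          (((Finset.univ.filter fun i => σ i = i).card : ℚ) + 2))) = eval 1 F := by
    rw [hF, eval_finset_sum]
    refine Finset.sum_congr rfl fun σ _ => ?_
    simp [mul_one_div, div_eq_mul_inv]
    rfl
  rw [hL, hFeq]
  rw [eval_add, eval_add, eval_mul, eval_C, eval_C, eval_X, hG1, hcval, haval, hG'0, hG0]
  rw [show n + 2 = n + 1 + 1 by omega, pow_succ, pow_succ]
  field_simp
  ring
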